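/- Let λ ∈ ℂ*, α ∈ ℂ with α ≠ 0. Then the Vir-module Ω_Vir(λ, α) = ℂ[t] with action L_i · f(t) = λ^i(t − iα) f(t − i) is simple: its only submodules are 0 and ℂ[t]. -/
import Mathlib


open Polynomial

/-- The action of the Virasoro basis element `L_i` on `ℂ[t]`:
`(L_i f)(t) = λ^i (t - iα) f(t - i)`. -/
noncomputable def virL (lam α : ℂ) (i : ℤ) (f : ℂ[X]) : ℂ[X] :=
  C (lam ^ i) * (X - C ((i : ℂ) * α)) * f.comp (X - C (i : ℂ))

/-- for `λ ≠ 0` and `α ≠ 0`, the Virasoro module `Ω_Vir(λ, α) = ℂ[t]`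
is simple: every subspace invariant under all the `L_i` is `0` or everything. -/
theorem stmt_5 (lam α : ℂ) (hlam : lam ≠ 0) (hα : α ≠ 0) :
    ∀ N : Submodule ℂ ℂ[X],
      (∀ (i : ℤ) (f : ℂ[X]), f ∈ N → virL lam α i f ∈ N) → N = ⊥ ∨ N = ⊤ := by
  intro N hinv
  -- `N` is closed under multiplication by `X` (from the `L_0` action).
  have hX : ∀ f ∈ N, X * f ∈ N := by
    intro f hf
    have h0 := hinv 0 f hf
    simpa [virL] using h0
  -- `N` is closed under multiplication by constants.
  have hC : ∀ (c : ℂ) (f : ℂ[X]), f ∈ N → C c * f ∈ N := by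
    intro c f hf
    simpa [Polynomial.smul_eq_C_mul] using N.smul_mem c hf
  -- hence `N` is closed under multiplication by arbitrary polynomials.
  have hmul : ∀ (p f : ℂ[X]), f ∈ N → p * f ∈ N := by
    intro p
    induction p using Polynomial.induction_on with
    | C c => intro f hf; exact hC c f hf
    | add p q hp hq =>
        intro f hf
        rw [add_mul]
        exact N.add_mem (hp f hf) (hq f hf)
    | monomial n c ih =>
        intro f hf
        have h := hX _ (ih f hf)
        have : C c * X ^ (n + 1) * f = X * (C c * X ^ n * f) := by ring
        rw [this]
        exact h
  -- view `N` as an ideal of `ℂ[X]`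
  let I : Ideal ℂ[X] :=
    { carrier := N
      add_mem' := fun ha hb => N.add_mem ha hb
      zero_mem' := N.zero_mem
      smul_mem' := fun p f hf => by simpa [smul_eq_mul] using hmul p f hf }
  have hIN : ∀ f : ℂ[X], f ∈ I ↔ f ∈ N := fun f => Iff.rfl
  obtain ⟨p, hp⟩ := (IsPrincipalIdealRing.principal I).principal
  by_cases hp0 : p = 0
  · -- generator zero : `N = ⊥`
    left
    ext f
    simp only [Submodule.mem_bot]
    rw [← hIN f]
    rw [hp, hp0]
    simp [Ideal.mem_span_singleton]
  · -- generator nonzero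
    have hpN : p ∈ N := by
      rw [← hIN p, hp]
      exact Ideal.subset_span (Set.mem_singleton p)
    by_cases hdeg : p.natDegree = 0
    · -- constant generator : `N = ⊤`
      right
      have hc : p = C (p.coeff 0) := Polynomial.eq_C_of_natDegree_eq_zero hdeg
      have hc0 : p.coeff 0 ≠ 0 := by
        intro h
        apply hp0
        rw [hc, h, map_zero]
      have h1 : (1 : ℂ[X]) ∈ N := by
        have h := hC (p.coeff 0)⁻¹ p hpN
        have he : C (p.coeff 0)⁻¹ * p = 1 := by
          nth_rewrite 2 [hc]
          rw [← C_mul, inv_mul_cancel₀ hc0, C_1]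
        rwa [he] at h
      ext f
      simp only [Submodule.mem_top, iff_true]
      have := hmul f 1 h1
      simpa using this
    · -- nonconstant generator: impossible
      exfalso
      -- key divisibility: `p ∣ (X - iα) p(X - i)` for all `i`
      have key : ∀ i : ℤ,
          p ∣ (X - C ((i : ℂ) * α)) * p.comp (X - C (i : ℂ)) := by
        intro i
        have hmem : virL lam α i p ∈ N := hinv i p hpN
        have hmem2 : C (lam ^ (-i)) * virL lam α i p ∈ N := hC _ _ hmem
        have heq : C (lam ^ (-i)) * virL lam α i p =
            (X - C ((i : ℂ) * α)) * p.comp (X - C (i : ℂ)) := by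
          unfold virL
          rw [← mul_assoc, ← mul_assoc, ← C_mul, ← zpow_add₀ hlam]
          simp
        rw [heq] at hmem2
        rw [← hIN _, hp] at hmem2
        obtain ⟨a, ha⟩ := Submodule.mem_span_singleton.mp hmem2
        exact ⟨a, by rw [← ha, smul_eq_mul, mul_comm]⟩
      -- `p` has a root (it is nonconstant)
      have hdegpos : 0 < p.degree := by
        rw [Polynomial.natDegree_pos_iff_degree_pos.symm]
        omega
      obtain ⟨z, hz⟩ := Complex.exists_root hdegpos
      have hSne : p.roots.toFinset.Nonempty := by
        refine ⟨z, ?_⟩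
        rw [Multiset.mem_toFinset, mem_roots hp0]
        exact hz
      -- pick a root of minimal real part
      obtain ⟨r, hrS, hrmin⟩ :=
        p.roots.toFinset.exists_min_image Complex.re hSne
      have hr : p.eval r = 0 := by
        rw [Multiset.mem_toFinset, mem_roots hp0] at hrS
        exact hrS
      -- for every positive integer `i`, `r = i * α`
      have main : ∀ i : ℤ, 0 < i → r = (i : ℂ) * α := by
        intro i hi
        obtain ⟨h, hh⟩ := key i
        have heval : (r - (i : ℂ) * α) * p.eval (r - (i : ℂ)) = 0 := by
          have := congrArg (eval r) hh
          simp only [eval_mul, eval_sub, eval_X, eval_C, eval_comp, hr,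
            zero_mul] at this
          exact this
        have hnot : p.eval (r - (i : ℂ)) ≠ 0 := by
          intro h0
          have hmem : (r - (i : ℂ)) ∈ p.roots.toFinset := by
            rw [Multiset.mem_toFinset, mem_roots hp0]
            exact h0
          have hle := hrmin _ hmem
          have hre : (r - (i : ℂ)).re = r.re - (i : ℝ) := by
            simp [Complex.sub_re]
          rw [hre] at hle
          have : (0 : ℝ) < (i : ℝ) := by exact_mod_cast hi
          linarith
        rcases mul_eq_zero.mp heval with h1 | h1
        · exact sub_eq_zero.mp h1
        · exact absurd h1 hnot
      have e1 : r = (1 : ℂ) * α := by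
        have := main 1 (by norm_num)
        simpa using this
      have e2 : r = (2 : ℂ) * α := by
        have := main 2 (by norm_num)
        simpa using this
      apply hα
      have : (1 : ℂ) * α = 2 * α := e1 ▸ e2
      have h2 : α = 2 * α := by rwa [one_mul] at this
      linear_combination -h2
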